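/- Let X be a real Hilbert space (or reflexive Banach space) and T : X → X* a map that is bounded (maps bounded sets to bounded sets), continuous, strictly monotone (⟨T(x)−T(y), x−y⟩ > 0 for x ≠ y), and coercive (⟨T(x), x⟩/‖x‖ → ∞ as ‖x‖ → ∞). Then for every f ∈ X* there is a unique x ∈ X with T(x) = f. In particular, applied to the nonlinear form A((u,v),(φ,χ)) := ⟨v,φ⟩ − ⟨u,χ⟩ + kλ_r⟨v,χ⟩ + kλ_e⟨∇v,∇χ⟩ − kγ⟨w×v,χ⟩ + ⟨∇u,∇φ⟩ + κ⟨|u|²u,φ⟩ + β⟨e(e·u),φ⟩ on X = V_h × V_h, the semi-implicit Euler step has a unique solution for any k > 0. -/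

import Mathlib

open Filter Topology InnerProductSpace

local notation "⟪" a ", " b "⟫" => @inner ℝ _ _ a b

section prelim
variable {X : Type*} [NormedAddCommGroup X] [InnerProductSpace ℝ X]

/-- Minty's trick. -/
lemma minty_trick (F : X → X) (hF : Continuous F) (y x : X)
    (h : ∀ w : X, 0 ≤ ⟪y - F w, x - w⟫) : F x = y := by
  have key : ∀ z : X, ⟪y - F x, z⟫ ≤ 0 := by
    intro z
    have hlim : Tendsto (fun t : ℝ => ⟪y - F (x + t • z), z⟫) (𝓝[>] (0:ℝ))
        (𝓝 ⟪y - F x, z⟫) := by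
      have : Continuous (fun t : ℝ => ⟪y - F (x + t • z), z⟫) := by
        continuity
      simpa using (this.tendsto 0).mono_left nhdsWithin_le_nhds
    refine le_of_tendsto hlim ?_
    filter_upwards [self_mem_nhdsWithin] with t (ht : 0 < t)
    have h1 := h (x + t • z)
    have h2 : x - (x + t • z) = (-t) • z := by
      rw [neg_smul]; abel
    rw [h2, real_inner_smul_right] at h1
    nlinarith
  have := key (y - F x)
  rw [real_inner_self_eq_norm_sq] at this
  have : ‖y - F x‖ = 0 := by nlinarith [norm_nonneg (y - F x)]
  exact (sub_eq_zero.mp (norm_eq_zero.mp this)).symm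

/-- Strong monotonicity gives uniqueness. -/
lemma strongMono_uniq (G : X → X) (hG : ∀ a b : X, ‖a - b‖ ^ 2 ≤ ⟪G a - G b, a - b⟫)
    {a b y : X} (ha : G a = y) (hb : G b = y) : a = b := by
  have := hG a b
  rw [ha, hb, sub_self] at this
  simp only [inner_zero_left] at this
  have : ‖a - b‖ = 0 := by nlinarith [norm_nonneg (a - b)]
  exact sub_eq_zero.mp (norm_eq_zero.mp this)

/-- Weak limit of a bounded net along an ultrafilter, in a Hilbert space. -/
lemma exists_weak_limit [CompleteSpace X] {ι : Type*} (U : Ultrafilter ι) (u : ι → X)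
    (C : ℝ) (hC : ∀ i, ‖u i‖ ≤ C) :
    ∃ x : X, ∀ z : X, Tendsto (fun i => ⟪u i, z⟫) U (𝓝 ⟪x, z⟫) := by
  have hbd : ∀ z : X, ∀ i, (fun i => ⟪u i, z⟫) i ∈ Set.Icc (-(C * ‖z‖)) (C * ‖z‖) := by
    intro z i
    have h1 : |⟪u i, z⟫| ≤ ‖u i‖ * ‖z‖ := abs_real_inner_le_norm _ _
    have h2 : ‖u i‖ * ‖z‖ ≤ C * ‖z‖ := mul_le_mul_of_nonneg_right (hC i) (norm_nonneg z)
    constructor <;> [nlinarith [abs_le.mp (h1.trans h2)]; nlinarith [abs_le.mp (h1.trans h2)]]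
  have hex : ∀ z : X, ∃ l : ℝ, Tendsto (fun i => ⟪u i, z⟫) U (𝓝 l) := by
    intro z
    have hcpt : IsCompact (Set.Icc (-(C * ‖z‖)) (C * ‖z‖)) := isCompact_Icc
    have hle : (U.map (fun i => ⟪u i, z⟫) : Filter ℝ) ≤ 𝓟 (Set.Icc (-(C * ‖z‖)) (C * ‖z‖)) := by
      exact Filter.le_principal_iff.mpr (Filter.mem_map.mpr (Filter.Eventually.of_forall (hbd z)))
    obtain ⟨l, _, hl⟩ := hcpt.ultrafilter_le_nhds (U.map (fun i => ⟪u i, z⟫)) hle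
    exact ⟨l, hl⟩
  choose l hl using hex
  have hadd : ∀ z w : X, l (z + w) = l z + l w := by
    intro z w
    refine tendsto_nhds_unique ?_ ((hl z).add (hl w))
    simpa [inner_add_right] using hl (z + w)
  have hsmul : ∀ (c : ℝ) (z : X), l (c • z) = c * l z := by
    intro c z
    refine tendsto_nhds_unique ?_ ((hl z).const_mul c)
    simpa [inner_smul_right] using hl (c • z)
  have hbound : ∀ z : X, |l z| ≤ C * ‖z‖ := by
    intro z
    have hcl : IsClosed (Set.Icc (-(C * ‖z‖)) (C * ‖z‖)) := isClosed_Icc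
    have hmem := hcl.mem_of_tendsto (hl z) (Filter.Eventually.of_forall (hbd z))
    exact abs_le.mpr ⟨hmem.1, hmem.2⟩
  set φ : X →ₗ[ℝ] ℝ :=
    { toFun := l, map_add' := hadd, map_smul' := fun c z => by simpa using hsmul c z }
  have hCnn : 0 ≤ C := by
    obtain ⟨i⟩ := U.neBot.nonempty_of_mem Filter.univ_mem
    exact (norm_nonneg (u i)).trans (hC i)
  set Φ : X →L[ℝ] ℝ := φ.mkContinuous C (fun z => by simpa [φ] using hbound z)
  refine ⟨(toDual ℝ X).symm Φ, fun z => ?_⟩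
  have : ⟪(toDual ℝ X).symm Φ, z⟫ = Φ z := toDual_symm_apply
  rw [this]
  exact hl z

end prelim

open Module

universe u
set_option maxHeartbeats 1000000

/-- A continuous strongly monotone map on a finite-dimensional real inner product
space is surjective. Proof by induction on the dimension, using the intermediate
value theorem (no Brouwer degree needed). -/
lemma findim_strongMono_surj : ∀ (n : ℕ) (E : Type u) [NormedAddCommGroup E]
    [InnerProductSpace ℝ E] [FiniteDimensional ℝ E], finrank ℝ E = n →
    ∀ G : E → E, Continuous G → (∀ a b : E, ‖a - b‖ ^ 2 ≤ ⟪G a - G b, a - b⟫) →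
    ∀ y : E, ∃ x, G x = y := by
  intro n
  induction n with
  | zero =>
    intro E _ _ _ hdim G _ _ y
    have : Subsingleton E := finrank_zero_iff.mp hdim
    exact ⟨y, Subsingleton.elim _ _⟩
  | succ n IH =>
    intro E _ _ _ hdim G hGc hGm y
    haveI : Fact (finrank ℝ E = n + 1) := ⟨hdim⟩
    haveI : Nontrivial E := Module.nontrivial_of_finrank_pos (R := ℝ) (by omega)
    obtain ⟨v, hv⟩ := exists_ne (0 : E)
    set e : E := ‖v‖⁻¹ • v with he_def
    have he : ‖e‖ = 1 := norm_smul_inv_norm hv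
    have he0 : e ≠ 0 := by intro h; rw [h, norm_zero] at he; norm_num at he
    set K : Submodule ℝ E := (ℝ ∙ e)ᗮ with hK_def
    have hK : finrank ℝ K = n := Submodule.finrank_orthogonal_span_singleton he0
    set P := Submodule.orthogonalProjectionOnto K with hP_def
    -- the key adjointness identity
    have hPinner : ∀ (z : E) (a : K), ⟪P z, a⟫ = ⟪z, (a : E)⟫ := by
      intro z a
      have h0 : ⟪z - (P z : E), (a : E)⟫ = 0 :=
        Submodule.starProjection_inner_eq_zero z (a : E) a.2
      have : ⟪(P z : E), (a : E)⟫ = ⟪z, (a : E)⟫ := by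
        have := inner_sub_left (𝕜 := ℝ) z (P z : E) (a : E)
        rw [h0] at this; linarith
      rw [Submodule.coe_inner]; exact this
    -- the parametrized reduced operator
    set H : ℝ → K → K := fun t a => P (G ((a : E) + t • e)) with hH_def
    have HM : ∀ (t : ℝ) (a b : K), ‖a - b‖ ^ 2 ≤ ⟪H t a - H t b, a - b⟫ := by
      intro t a b
      have hsub : ((a : E) + t • e) - ((b : E) + t • e) = (a : E) - (b : E) := by abel
      have h1 := hGm ((a : E) + t • e) ((b : E) + t • e)
      rw [hsub] at h1
      have hd : H t a - H t b = P (G ((a : E) + t • e) - G ((b : E) + t • e)) :=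
        (map_sub P _ _).symm
      have h2 : ⟪H t a - H t b, a - b⟫
          = ⟪G ((a : E) + t • e) - G ((b : E) + t • e), (a : E) - (b : E)⟫ := by
        rw [hd, hPinner]; norm_cast
      rw [h2]
      have h3 : ‖a - b‖ = ‖(a : E) - (b : E)‖ := by
        rw [Submodule.coe_norm]
        simp
      rw [h3]; exact h1
    have Hc : ∀ t : ℝ, Continuous (H t) := by
      intro t
      exact P.continuous.comp (hGc.comp (continuous_subtype_val.add continuous_const))
    have sol : ∀ t : ℝ, ∃ x : K, H t x = P y := fun t => IH K hK (H t) (Hc t) (HM t) (P y)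
    set x' : ℝ → K := fun t => (sol t).choose with hx'_def
    have hx' : ∀ t, H t (x' t) = P y := fun t => (sol t).choose_spec
    set ξ : ℝ → E := fun t => (x' t : E) + t • e with hξ_def
    -- Galerkin relation
    have rel : ∀ (t : ℝ) (w : K), ⟪G (ξ t) - y, (w : E)⟫ = 0 := by
      intro t w
      have h1 : ⟪H t (x' t), w⟫ = ⟪P y, w⟫ := by rw [hx']
      rw [hH_def] at h1
      simp only [] at h1
      rw [hPinner, hPinner] at h1
      rw [inner_sub_left, h1]; ring
    -- continuity estimate
    have est : ∀ t s : ℝ, ‖x' t - x' s‖ ≤ ‖G (ξ s) - G ((x' s : E) + t • e)‖ := by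
      intro t s
      set w : K := x' t - x' s with hw_def
      have hwE : ((w : E)) = (x' t : E) - (x' s : E) := by
        rw [hw_def]; push_cast; ring
      have hnw : ‖w‖ = ‖(w : E)‖ := (Submodule.coe_norm w).symm
      have h1 := hGm (ξ t) ((x' s : E) + t • e)
      have hsub : ξ t - ((x' s : E) + t • e) = (w : E) := by
        simp only [hξ_def, hwE]; abel
      rw [hsub] at h1
      have h2 : ⟪G (ξ t) - G ((x' s : E) + t • e), (w : E)⟫
          = ⟪G (ξ t) - y, (w : E)⟫ + ⟪y - G (ξ s), (w : E)⟫
            + ⟪G (ξ s) - G ((x' s : E) + t • e), (w : E)⟫ := by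
        rw [← inner_add_left, ← inner_add_left]; congr 1; abel
      have h3 : ⟪y - G (ξ s), (w : E)⟫ = 0 := by
        have := rel s w
        rw [inner_sub_left] at this ⊢; linarith
      rw [h2, rel t w, h3] at h1
      have h4 : ⟪G (ξ s) - G ((x' s : E) + t • e), (w : E)⟫
          ≤ ‖G (ξ s) - G ((x' s : E) + t • e)‖ * ‖(w : E)‖ := real_inner_le_norm _ _
      rw [hnw]
      nlinarith [norm_nonneg (w : E), norm_nonneg (G (ξ s) - G ((x' s : E) + t • e))]
    have x'cont : Continuous x' := by
      rw [continuous_iff_continuousAt]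
      intro s
      rw [ContinuousAt, tendsto_iff_dist_tendsto_zero]
      have hg : Tendsto (fun t : ℝ => ‖G (ξ s) - G ((x' s : E) + t • e)‖) (𝓝 s) (𝓝 0) := by
        have hc : Continuous (fun t : ℝ => ‖G (ξ s) - G ((x' s : E) + t • e)‖) :=
          (continuous_const.sub (hGc.comp (continuous_const.add
            (continuous_id.smul continuous_const)))).norm
        have hval : ‖G (ξ s) - G ((x' s : E) + s • e)‖ = 0 := by
          simp only [hξ_def]; simp
        simpa [hval] using hc.tendsto s
      refine squeeze_zero (fun t => dist_nonneg) (fun t => ?_) hg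
      rw [dist_eq_norm]; exact est t s
    have ξcont : Continuous ξ := by
      rw [hξ_def]
      exact (continuous_subtype_val.comp x'cont).add (continuous_id.smul continuous_const)
    set φ : ℝ → ℝ := fun t => ⟪G (ξ t) - y, e⟫ with hφ_def
    have φcont : Continuous φ := by
      rw [hφ_def]
      exact Continuous.inner ((hGc.comp ξcont).sub continuous_const) continuous_const
    have φmono : ∀ s t : ℝ, s ≤ t → φ s + (t - s) ≤ φ t := by
      intro s t hst
      rcases eq_or_lt_of_le hst with rfl | hlt
      · simp
      set w : K := x' t - x' s with hw_def
      have hwE : ((w : E)) = (x' t : E) - (x' s : E) := by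
        rw [hw_def]; push_cast; ring
      have hsub : ξ t - ξ s = (w : E) + (t - s) • e := by
        simp only [hξ_def, hwE, sub_smul]; abel
      have h1 := hGm (ξ t) (ξ s)
      rw [hsub] at h1
      have hwe : ⟪(w : E), e⟫ = 0 := by
        have hw2 : (w : E) ∈ (ℝ ∙ e)ᗮ := w.2
        rw [Submodule.mem_orthogonal] at hw2
        have h := hw2 e (Submodule.mem_span_singleton_self e)
        rw [real_inner_comm]; exact h
      have hnorm : ‖(w : E) + (t - s) • e‖ ^ 2 = ‖(w : E)‖ ^ 2 + (t - s) ^ 2 := by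
        rw [norm_add_sq_real, real_inner_smul_right, hwe, norm_smul, he]
        rw [mul_one, Real.norm_eq_abs, sq_abs]; ring
      have hright : ⟪G (ξ t) - G (ξ s), (w : E) + (t - s) • e⟫
          = (t - s) * (φ t - φ s) := by
        rw [inner_add_right, real_inner_smul_right]
        have hzero : ⟪G (ξ t) - G (ξ s), (w : E)⟫ = 0 := by
          have ha := rel t w
          have hb := rel s w
          rw [inner_sub_left] at ha hb ⊢; linarith
        have hφsub : ⟪G (ξ t) - G (ξ s), e⟫ = φ t - φ s := by
          simp only [hφ_def]
          rw [inner_sub_left, inner_sub_left, inner_sub_left]; ring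
        rw [hzero, hφsub]; ring
      rw [hright, hnorm] at h1
      have hts : 0 < t - s := by linarith
      nlinarith [norm_nonneg (w : E), sq_nonneg ‖(w : E)‖]
    -- coercivity of φ and IVT
    set b : ℝ := |φ 0| + 1 with hb_def
    have hb0 : 0 ≤ b := by rw [hb_def]; positivity
    have hφb : 1 ≤ φ b := by
      have h := φmono 0 b hb0
      have hb1 : |φ 0| + 1 ≤ b := le_of_eq hb_def.symm
      nlinarith [neg_abs_le (φ 0)]
    have hφa : φ (-b) ≤ -1 := by
      have h := φmono (-b) 0 (by linarith)
      have hb1 : |φ 0| + 1 ≤ b := le_of_eq hb_def.symm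
      nlinarith [le_abs_self (φ 0)]
    have hab : (-b : ℝ) ≤ b := by linarith
    have hivt := intermediate_value_Icc hab φcont.continuousOn
    have h0mem : (0 : ℝ) ∈ Set.Icc (φ (-b)) (φ b) := ⟨by linarith, by linarith⟩
    obtain ⟨t₀, _, ht₀⟩ := hivt h0mem
    -- conclude
    refine ⟨ξ t₀, ?_⟩
    have hmem : G (ξ t₀) - y ∈ Kᗮ := by
      rw [Submodule.mem_orthogonal]
      intro u hu
      rw [real_inner_comm]
      exact rel t₀ ⟨u, hu⟩
    rw [hK_def, Submodule.orthogonal_orthogonal] at hmem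
    obtain ⟨c, hc⟩ := Submodule.mem_span_singleton.mp hmem
    have hce : ⟪G (ξ t₀) - y, e⟫ = c := by
      rw [← hc, real_inner_smul_left, real_inner_self_eq_norm_sq, he]; ring
    have hc0 : c = 0 := by rw [← hce]; exact ht₀
    rw [hc0, zero_smul] at hc
    exact sub_eq_zero.mp hc.symm

section hilbert
variable {X : Type*} [NormedAddCommGroup X] [InnerProductSpace ℝ X] [CompleteSpace X]

/-- A continuous strongly monotone map on a real Hilbert space is surjective:
Galerkin approximation over the net of finite-dimensional subspaces, with a weak
limit along an ultrafilter and Minty's trick. -/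
lemma hilbert_strongMono_surj (G : X → X) (hGc : Continuous G)
    (hGm : ∀ a b : X, ‖a - b‖ ^ 2 ≤ ⟪G a - G b, a - b⟫) (y : X) : ∃ x, G x = y := by
  -- Galerkin solutions on finite-dimensional subspaces
  have galerkin : ∀ S : Finset X, ∃ x : X, x ∈ Submodule.span ℝ (S : Set X) ∧
      ∀ v ∈ Submodule.span ℝ (S : Set X), ⟪G x, v⟫ = ⟪y, v⟫ := by
    intro S
    set V : Submodule ℝ X := Submodule.span ℝ (S : Set X) with hV_def
    haveI : FiniteDimensional ℝ V := FiniteDimensional.span_of_finite ℝ S.finite_toSet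
    set P := Submodule.orthogonalProjectionOnto V with hP_def
    have hPinner : ∀ (z : X) (a : V), ⟪P z, a⟫ = ⟪z, (a : X)⟫ := by
      intro z a
      have h0 : ⟪z - (P z : X), (a : X)⟫ = 0 :=
        Submodule.starProjection_inner_eq_zero z (a : X) a.2
      have h1 := inner_sub_left (𝕜 := ℝ) z (P z : X) (a : X)
      rw [h0] at h1
      rw [Submodule.coe_inner]; linarith
    set H : V → V := fun a => P (G (a : X)) with hH_def
    have HM : ∀ a b : V, ‖a - b‖ ^ 2 ≤ ⟪H a - H b, a - b⟫ := by
      intro a b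
      have hd : H a - H b = P (G (a : X) - G (b : X)) := (map_sub P _ _).symm
      have h2 : ⟪H a - H b, a - b⟫ = ⟪G (a : X) - G (b : X), (a : X) - (b : X)⟫ := by
        rw [hd, hPinner]; norm_cast
      have h3 : ‖a - b‖ = ‖(a : X) - (b : X)‖ := by
        rw [Submodule.coe_norm]; simp
      rw [h2, h3]
      exact hGm _ _
    have Hc : Continuous H := P.continuous.comp (hGc.comp continuous_subtype_val)
    obtain ⟨x, hx⟩ := findim_strongMono_surj (finrank ℝ V) V rfl H Hc HM (P y)
    refine ⟨(x : X), x.2, fun v hv => ?_⟩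
    have h1 : ⟪H x, (⟨v, hv⟩ : V)⟫ = ⟪P y, (⟨v, hv⟩ : V)⟫ := by rw [hx]
    rw [hH_def] at h1
    rw [hPinner, hPinner] at h1
    exact h1
  choose xS hxS_mem hxS_rel using galerkin
  -- uniform bound
  set C : ℝ := ‖y‖ + ‖G 0‖ with hC_def
  have hbound : ∀ S : Finset X, ‖xS S‖ ≤ C := by
    intro S
    have h1 := hGm (xS S) 0
    have h2 : ⟪G (xS S), xS S⟫ = ⟪y, xS S⟫ :=
      hxS_rel S (xS S) (hxS_mem S)
    have h3 : ⟪G (xS S) - G 0, xS S⟫ = ⟪y, xS S⟫ - ⟪G 0, xS S⟫ := by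
      rw [inner_sub_left, h2]
    rw [sub_zero] at h1
    rw [h3] at h1
    have h4 : ⟪y, xS S⟫ ≤ ‖y‖ * ‖xS S‖ := real_inner_le_norm _ _
    have h5 : -⟪G 0, xS S⟫ ≤ ‖G 0‖ * ‖xS S‖ := by
      have := real_inner_le_norm (G 0) (-(xS S))
      rw [inner_neg_right] at this
      simpa using this
    nlinarith [norm_nonneg (xS S), norm_nonneg y, norm_nonneg (G 0)]
  -- ultrafilter weak limit
  set U : Ultrafilter (Finset X) := Ultrafilter.of atTop with hU_def
  have hUle : (U : Filter (Finset X)) ≤ atTop := Ultrafilter.of_le atTop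
  obtain ⟨x, hx⟩ := exists_weak_limit U xS C hbound
  have hev : ∀ w : X, ∀ᶠ S : Finset X in U, ⟪G (xS S), w⟫ = ⟪y, w⟫ := by
    intro w
    have : ∀ᶠ S : Finset X in atTop, ⟪G (xS S), w⟫ = ⟪y, w⟫ := by
      filter_upwards [Filter.eventually_ge_atTop {w}] with S hS
      exact hxS_rel S w (Submodule.subset_span (hS (Finset.mem_singleton_self w)))
    exact this.filter_mono hUle
  refine ⟨x, minty_trick G hGc y x fun w => ?_⟩
  -- pass to the limit in the monotonicity inequality
  have hlim : Tendsto (fun S => ⟪G (xS S) - G w, xS S - w⟫) U (𝓝 ⟪y - G w, x - w⟫) := by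
    have e1 : (fun S => ⟪G (xS S) - G w, xS S - w⟫) =ᶠ[(U : Filter (Finset X))]
        (fun S => ⟪y, xS S⟫ - ⟪y, w⟫ - ⟪xS S, G w⟫ + ⟪G w, w⟫) := by
      filter_upwards [hev w] with S hSw
      have h2 : ⟪G (xS S), xS S⟫ = ⟪y, xS S⟫ := hxS_rel S (xS S) (hxS_mem S)
      rw [inner_sub_left, inner_sub_right, inner_sub_right, h2, hSw]
      rw [real_inner_comm (xS S) (G w)]
      ring
    have l1 : Tendsto (fun S => ⟪y, xS S⟫) U (𝓝 ⟪y, x⟫) := by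
      have := hx y
      simp_rw [real_inner_comm y] at this ⊢
      exact this
    have l2 : Tendsto (fun S => ⟪xS S, G w⟫) U (𝓝 ⟪x, G w⟫) := hx (G w)
    have hT : Tendsto (fun S => ⟪y, xS S⟫ - ⟪y, w⟫ - ⟪xS S, G w⟫ + ⟪G w, w⟫) U
        (𝓝 (⟪y, x⟫ - ⟪y, w⟫ - ⟪x, G w⟫ + ⟪G w, w⟫)) := by
      exact ((l1.sub tendsto_const_nhds).sub l2).add tendsto_const_nhds
    refine (Tendsto.congr' e1.symm ?_)
    convert hT using 2
    rw [inner_sub_left, inner_sub_right, inner_sub_right, real_inner_comm x (G w)]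
    ring
  refine ge_of_tendsto hlim ?_
  filter_upwards with S
  have := hGm (xS S) w
  nlinarith [sq_nonneg ‖xS S - w‖]
end hilbert

section main
variable {X : Type*} [NormedAddCommGroup X] [InnerProductSpace ℝ X] [CompleteSpace X]

/-- A continuous, monotone, coercive map on a real Hilbert space is surjective. -/
lemma hilbert_mono_coercive_surj (F : X → X) (hFc : Continuous F)
    (hFm : ∀ a b : X, 0 ≤ ⟪F a - F b, a - b⟫)
    (hcoer : ∀ M : ℝ, ∃ R : ℝ, ∀ x : X, R ≤ ‖x‖ → M ≤ ⟪F x, x⟫ / ‖x‖) (y : X) :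
    ∃ x, F x = y := by
  have hreg : ∀ n : ℕ, ∃ x : X, F x = y - ((n : ℝ) + 1)⁻¹ • x := by
    intro n
    set c : ℝ := (n : ℝ) + 1 with hc_def
    have hc : 0 < c := by rw [hc_def]; positivity
    set G : X → X := fun x => c • F x + x with hG_def
    have hGc : Continuous G := by
      rw [hG_def]
      exact (hFc.const_smul c).add continuous_id
    have hGm : ∀ a b : X, ‖a - b‖ ^ 2 ≤ ⟪G a - G b, a - b⟫ := by
      intro a b
      have h1 := hFm a b
      have h2 : G a - G b = c • (F a - F b) + (a - b) := by
        simp only [hG_def, smul_sub]; abel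
      rw [h2, inner_add_left, real_inner_smul_left, real_inner_self_eq_norm_sq]
      nlinarith
    obtain ⟨x, hx⟩ := hilbert_strongMono_surj G hGc hGm (c • y)
    refine ⟨x, ?_⟩
    have h3 : c • F x + x = c • y := hx
    have h4 := congrArg (fun z : X => c⁻¹ • z) h3
    simp only [smul_add, smul_smul, inv_mul_cancel₀ hc.ne', one_smul] at h4
    rw [← h4]; abel
  choose xn hxn using hreg
  -- uniform bound from coercivity
  obtain ⟨R, hR⟩ := hcoer (‖y‖ + 1)
  set C : ℝ := max R 0 with hC_def
  have hbd : ∀ n, ‖xn n‖ ≤ C := by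
    intro n
    by_contra hcon
    push_neg at hcon
    have hxpos : 0 < ‖xn n‖ := lt_of_le_of_lt (le_max_right R 0) hcon
    have hxR : R ≤ ‖xn n‖ := le_trans (le_max_left R 0) hcon.le
    have h1 := hR (xn n) hxR
    have h2 : ⟪F (xn n), xn n⟫ ≤ ‖y‖ * ‖xn n‖ := by
      rw [hxn n, inner_sub_left, real_inner_smul_left, real_inner_self_eq_norm_sq]
      have h3 : ⟪y, xn n⟫ ≤ ‖y‖ * ‖xn n‖ := real_inner_le_norm _ _
      have h4 : (0 : ℝ) < ((n : ℝ) + 1)⁻¹ := by positivity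
      nlinarith [sq_nonneg ‖xn n‖]
    rw [le_div_iff₀ hxpos] at h1
    nlinarith
  have hC0 : 0 ≤ C := le_max_right R 0
  -- weak limit along an ultrafilter
  set U : Ultrafilter ℕ := Ultrafilter.of atTop with hU_def
  have hUle : (U : Filter ℕ) ≤ atTop := Ultrafilter.of_le atTop
  obtain ⟨x, hx⟩ := exists_weak_limit U xn C hbd
  refine ⟨x, minty_trick F hFc y x fun w => ?_⟩
  have key : Tendsto (fun n => ⟪F (xn n) - F w, xn n - w⟫) U (𝓝 ⟪y - F w, x - w⟫) := by
    have e1 : ∀ n : ℕ, ⟪F (xn n) - F w, xn n - w⟫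
        = ⟪xn n, y - F w⟫ - ⟪y - F w, w⟫ - ((n : ℝ) + 1)⁻¹ * ⟪xn n, xn n - w⟫ := by
      intro n
      rw [hxn n]
      have h5 : y - ((n : ℝ) + 1)⁻¹ • xn n - F w = (y - F w) - ((n : ℝ) + 1)⁻¹ • xn n := by
        abel
      rw [h5, inner_sub_left, real_inner_smul_left, inner_sub_right,
        real_inner_comm (y - F w) (xn n)]
    have l1 : Tendsto (fun n => ⟪xn n, y - F w⟫) U (𝓝 ⟪x, y - F w⟫) := hx (y - F w)
    have l2 : Tendsto (fun n : ℕ => ((n : ℝ) + 1)⁻¹ * ⟪xn n, xn n - w⟫) U (𝓝 0) := by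
      apply squeeze_zero_norm (a := fun n : ℕ => ((n : ℝ) + 1)⁻¹ * (C * (C + ‖w‖)))
      · intro n
        have hb1 : |⟪xn n, xn n - w⟫| ≤ ‖xn n‖ * ‖xn n - w‖ := abs_real_inner_le_norm _ _
        have hb2 : ‖xn n - w‖ ≤ ‖xn n‖ + ‖w‖ := norm_sub_le _ _
        have hb3 : ‖xn n‖ * ‖xn n - w‖ ≤ C * (C + ‖w‖) := by
          have := hbd n
          nlinarith [norm_nonneg (xn n), norm_nonneg (xn n - w), norm_nonneg w]
        have h4 : (0 : ℝ) < ((n : ℝ) + 1)⁻¹ := by positivity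
        rw [norm_mul, Real.norm_eq_abs, Real.norm_eq_abs, abs_of_pos h4]
        exact mul_le_mul_of_nonneg_left ((hb1.trans hb3)) h4.le
      · have hn : Tendsto (fun n : ℕ => ((n : ℝ) + 1)⁻¹) atTop (𝓝 0) :=
          tendsto_one_div_add_atTop_nhds_zero_nat.congr (fun n => by rw [one_div])
        have := (hn.mul_const (C * (C + ‖w‖))).mono_left hUle
        simpa using this
    have hT : Tendsto (fun n : ℕ => ⟪xn n, y - F w⟫ - ⟪y - F w, w⟫
        - ((n : ℝ) + 1)⁻¹ * ⟪xn n, xn n - w⟫) U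
        (𝓝 (⟪x, y - F w⟫ - ⟪y - F w, w⟫ - 0)) :=
      (l1.sub tendsto_const_nhds).sub l2
    have hlimeq : ⟪x, y - F w⟫ - ⟪y - F w, w⟫ - 0 = ⟪y - F w, x - w⟫ := by
      rw [inner_sub_right (𝕜 := ℝ) (y - F w) x w, real_inner_comm x (y - F w)]
      ring
    rw [hlimeq] at hT
    exact Tendsto.congr (fun n => (e1 n).symm) hT
  exact ge_of_tendsto key (Filter.Eventually.of_forall fun n => hFm (xn n) w)

end main


/-- Browder–Minty theorem on a real Hilbert space `X`: if `T : X → X*` is bounded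
(maps bounded sets to bounded sets), continuous, strictly monotone and coercive,
then for every `f ∈ X*` there is a unique `x ∈ X` with `T x = f`.
(This is the abstract result yielding unique solvability of the semi-implicit
Euler step of the LLBar scheme for any time step `k > 0`.) -/
theorem browder_minty {X : Type*} [NormedAddCommGroup X] [InnerProductSpace ℝ X]
    [CompleteSpace X] (T : X → StrongDual ℝ X)
    (hbdd : ∀ s : Set X, Bornology.IsBounded s → Bornology.IsBounded (T '' s))
    (hcont : Continuous T)
    (hmono : ∀ x y : X, x ≠ y → 0 < (T x - T y) (x - y))
    (hcoer : ∀ M : ℝ, ∃ R : ℝ, ∀ x : X, R ≤ ‖x‖ → M ≤ T x x / ‖x‖) :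
    ∀ f : StrongDual ℝ X, ∃! x : X, T x = f := by
  intro f
  set F : X → X := fun x => (toDual ℝ X).symm (T x) with hF_def
  have hTF : ∀ x z : X, T x z = ⟪F x, z⟫ := by
    intro x z
    simp only [hF_def]
    exact toDual_symm_apply.symm
  have hFc : Continuous F := by
    rw [hF_def]
    exact (toDual ℝ X).symm.continuous.comp hcont
  have hFm : ∀ a b : X, 0 ≤ ⟪F a - F b, a - b⟫ := by
    intro a b
    rcases eq_or_ne a b with rfl | hab
    · simp
    · have h := hmono a b hab
      have h2 : (T a - T b) (a - b) = ⟪F a - F b, a - b⟫ := by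
        rw [ContinuousLinearMap.sub_apply, hTF, hTF, inner_sub_left]
      rw [h2] at h
      linarith
  have hFcoer : ∀ M : ℝ, ∃ R : ℝ, ∀ x : X, R ≤ ‖x‖ → M ≤ ⟪F x, x⟫ / ‖x‖ := by
    intro M
    obtain ⟨R, hR⟩ := hcoer M
    exact ⟨R, fun x hx => by rw [← hTF]; exact hR x hx⟩
  obtain ⟨x, hxsol⟩ := hilbert_mono_coercive_surj F hFc hFm hFcoer ((toDual ℝ X).symm f)
  have hTx : T x = f := by
    have h2 : (toDual ℝ X) (F x) = (toDual ℝ X) ((toDual ℝ X).symm f) :=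
      congrArg _ hxsol
    simp only [hF_def] at h2
    rwa [LinearIsometryEquiv.apply_symm_apply, LinearIsometryEquiv.apply_symm_apply] at h2
  refine ⟨x, hTx, fun z hz => ?_⟩
  by_contra hne
  have h := hmono z x hne
  rw [hz, hTx, sub_self] at h
  simp at h
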